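/- Let K be a compact convex body in ℝ^d with B(0,r) ⊆ K ⊆ B(0,R), μ_K its Gauss curvature measure, σ the uniform probability measure on S^{d-1}, and c(x,n) = −ln(max(0,⟨x,n⟩)). Then every c-optimal transport plan γ ∈ Γ(σ, μ_K) is supported on D_ε = {(x,n) : d(x,n) ≤ π/2 − ε}, where ε = π/2 − arccos(r/R) > 0 and d is the geodesic distance. Equivalently, ⟨x,n⟩ ≥ r/R on the support of γ. -/

import Mathlib

open MeasureTheory
open scoped RealInnerProductSpace

/-- The uniform probability measure on the unit sphere of `ℝ^d`, i.e. the normalized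
`(d-1)`-dimensional Hausdorff measure. -/
noncomputable def uniformSphere (d : ℕ) : Measure (EuclideanSpace ℝ (Fin d)) :=
  ((μH[(d : ℝ) - 1] (Metric.sphere (0 : EuclideanSpace ℝ (Fin d)) 1))⁻¹ : ENNReal) •
    (μH[(d : ℝ) - 1] : Measure (EuclideanSpace ℝ (Fin d))).restrict
      (Metric.sphere (0 : EuclideanSpace ℝ (Fin d)) 1)

/-- The radial function of a convex body. -/
noncomputable def radialFn {d : ℕ} (K : Set (EuclideanSpace ℝ (Fin d)))
    (x : EuclideanSpace ℝ (Fin d)) : ℝ :=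
  sSup {s : ℝ | s • x ∈ K}

/-- The Gauss curvature prescription cost `c(x,n) = -ln(max(0,⟨x,n⟩))`, with value `+∞`
encoded in `ℝ≥0∞`. -/
noncomputable def gaussCost {d : ℕ} (x n : EuclideanSpace ℝ (Fin d)) : ENNReal :=
  if ⟪x, n⟫ ≤ 0 then ⊤ else ENNReal.ofReal (-Real.log ⟪x, n⟫)

/-- The (topological) support of a measure. -/
def msupport {X : Type*} [TopologicalSpace X] [MeasurableSpace X] (γ : Measure X) : Set X :=
  {p | ∀ U : Set X, IsOpen U → p ∈ U → 0 < γ U}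

section Aux

lemma isClosed_proj_fst {d : ℕ}
    {C : Set (EuclideanSpace ℝ (Fin d) × EuclideanSpace ℝ (Fin d))}
    {K : Set (EuclideanSpace ℝ (Fin d))} (hC : IsClosed C) (hK : IsCompact K)
    (hsub : ∀ p ∈ C, p.2 ∈ K) : IsClosed (Prod.fst '' C) := by
  apply IsSeqClosed.isClosed
  intro u n hu hlim
  choose a haC ha1 using hu
  obtain ⟨y, hyK, φ, hφ, hφlim⟩ := hK.tendsto_subseq (fun k => hsub _ (haC k))
  have h1 : Filter.Tendsto (fun k => (a (φ k)).1) Filter.atTop (nhds n) := by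
    have : (fun k => (a (φ k)).1) = (fun k => u (φ k)) := by
      funext k; exact ha1 (φ k)
    rw [this]
    exact hlim.comp (hφ.tendsto_atTop)
  have h2 : Filter.Tendsto (fun k => a (φ k)) Filter.atTop (nhds (n, y)) := by
    have := h1.prodMk_nhds hφlim
    simpa using this
  have : (n, y) ∈ C := hC.isSeqClosed (fun k => haC (φ k)) h2
  exact ⟨(n, y), this, rfl⟩

lemma null_inter_of_additive {X : Type*} [MeasurableSpace X] (μ : Measure X)
    (hfin : μ Set.univ ≠ ⊤) (A B : Set X) (h : μ A + μ B ≤ μ (A ∪ B)) :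
    μ (A ∩ B) = 0 := by
  set A' := toMeasurable μ A with hA'
  set B' := toMeasurable μ B with hB'
  have hBm : MeasurableSet B' := measurableSet_toMeasurable μ _
  have key : μ (A' ∪ B') + μ (A' ∩ B') = μ A' + μ B' := measure_union_add_inter A' hBm
  have hle : μ A' + μ B' ≤ μ (A' ∪ B') := by
    rw [measure_toMeasurable, measure_toMeasurable]
    exact h.trans (measure_mono (Set.union_subset_union (subset_toMeasurable μ _)
      (subset_toMeasurable μ _)))
  have hfin' : μ (A' ∪ B') ≠ ⊤ :=
    ne_top_of_le_ne_top hfin (measure_mono (Set.subset_univ _))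
  have h0 : μ (A' ∪ B') + μ (A' ∩ B') ≤ μ (A' ∪ B') + 0 := by
    rw [key, add_zero]; exact hle
  have h1 : μ (A' ∩ B') ≤ 0 := (ENNReal.add_le_add_iff_left hfin').mp h0
  have h2 : μ (A ∩ B) ≤ μ (A' ∩ B') :=
    measure_mono (Set.inter_subset_inter (subset_toMeasurable μ _) (subset_toMeasurable μ _))
  exact le_antisymm (h2.trans h1) zero_le

lemma radial_facts {d : ℕ} {K : Set (EuclideanSpace ℝ (Fin d))} (hKcl : IsClosed K)
    {r R : ℝ} (hr : 0 < r) (hKr : Metric.closedBall 0 r ⊆ K)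
    (hKR : K ⊆ Metric.closedBall 0 R)
    {x : EuclideanSpace ℝ (Fin d)} (hx : ‖x‖ = 1) :
    r ≤ radialFn K x ∧ radialFn K x ≤ R ∧ radialFn K x • x ∈ K ∧
      ∀ s : ℝ, s • x ∈ K → s ≤ radialFn K x := by
  have hrT : r • x ∈ K := by
    apply hKr
    rw [mem_closedBall_zero_iff, norm_smul, hx, mul_one]
    exact (abs_of_pos hr).le
  have hbdd : BddAbove {s : ℝ | s • x ∈ K} := by
    refine ⟨R, fun s hs => ?_⟩
    have := hKR hs
    rw [mem_closedBall_zero_iff, norm_smul, hx, mul_one] at this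
    exact (le_abs_self s).trans this
  have hne : Set.Nonempty {s : ℝ | s • x ∈ K} := ⟨r, hrT⟩
  have hcl : IsClosed {s : ℝ | s • x ∈ K} :=
    hKcl.preimage (continuous_id.smul continuous_const)
  refine ⟨le_csSup hbdd hrT, csSup_le hne (fun s hs => ?_), hcl.csSup_mem hne hbdd,
    fun s hs => le_csSup hbdd hs⟩
  have := hKR hs
  rw [mem_closedBall_zero_iff, norm_smul, hx, mul_one] at this
  exact (le_abs_self s).trans this

lemma radial_eq_of_max {d : ℕ} {K : Set (EuclideanSpace ℝ (Fin d))} (hKcl : IsClosed K)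
    {r R : ℝ} (hr : 0 < r) (hKr : Metric.closedBall 0 r ⊆ K)
    (hKR : K ⊆ Metric.closedBall 0 R)
    {n x : EuclideanSpace ℝ (Fin d)} (hx : ‖x‖ = 1) {t : ℝ}
    (htK : t • x ∈ K) (hmax : ∀ y ∈ K, ⟪n, y⟫ ≤ ⟪n, t • x⟫) (hpos : 0 < ⟪n, x⟫) :
    radialFn K x = t := by
  obtain ⟨h1, h2, h3, h4⟩ := radial_facts hKcl hr hKr hKR hx
  refine le_antisymm ?_ (h4 t htK)
  have hineq := hmax _ h3
  rw [real_inner_smul_right, real_inner_smul_right] at hineq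
  exact le_of_mul_le_mul_right hineq hpos

end Aux

set_option maxHeartbeats 2000000 in
/-- Every optimal transport plan between the uniform measure `σ` on the sphere and the Gauss
curvature measure `μ_K` of a convex body `K` with `B(0,r) ⊆ K ⊆ B(0,R)`, for the cost
`c(x,n) = -ln(max(0,⟨x,n⟩))`, satisfies `⟨x,n⟩ ≥ r/R` on its support (equivalently, it is
supported on `D_ε = {(x,n) : d(x,n) ≤ π/2 - ε}` with `ε = π/2 - arccos(r/R)`). -/
theorem gauss_optimal_plan_support {d : ℕ} (K : Set (EuclideanSpace ℝ (Fin d)))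
    (hKconv : Convex ℝ K) (hKcpt : IsCompact K)
    (r R : ℝ) (hr : 0 < r) (hrR : r < R)
    (hKr : Metric.closedBall 0 r ⊆ K) (hKR : K ⊆ Metric.closedBall 0 R)
    (ν : Measure (EuclideanSpace ℝ (Fin d)))
    -- `ν` is the Gauss curvature measure of `K`:
    -- `ν(A) = σ(G_K ∘ ρ⃗_K (A))` for every Borel set `A`
    (hν : ∀ A : Set (EuclideanSpace ℝ (Fin d)), MeasurableSet A →
      ν A = uniformSphere d
        {n | ∃ x ∈ A, ‖x‖ = 1 ∧ ∀ y ∈ K, ⟪n, y⟫ ≤ radialFn K x * ⟪n, x⟫})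
    (γ : Measure (EuclideanSpace ℝ (Fin d) × EuclideanSpace ℝ (Fin d)))
    (hγ : γ.fst = uniformSphere d ∧ γ.snd = ν)
    (hopt : ∀ γ' : Measure (EuclideanSpace ℝ (Fin d) × EuclideanSpace ℝ (Fin d)),
      γ'.fst = uniformSphere d → γ'.snd = ν →
      (∫⁻ p, gaussCost p.1 p.2 ∂γ) ≤ ∫⁻ p, gaussCost p.1 p.2 ∂γ') :
    ∀ p ∈ msupport γ, r / R ≤ ⟪p.1, p.2⟫ := by
  classical
  obtain ⟨hfst, hsnd⟩ := hγ
  set S : Set (EuclideanSpace ℝ (Fin d)) := Metric.sphere (0 : EuclideanSpace ℝ (Fin d)) 1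
    with hS
  set σ : Measure (EuclideanSpace ℝ (Fin d)) := uniformSphere d with hσ
  -- degenerate case
  by_cases hdeg : (μH[(d : ℝ) - 1] S = 0) ∨ (μH[(d : ℝ) - 1] S = ⊤)
  · have hσ0 : σ = 0 := by
      rcases hdeg with h | h
      · rw [hσ, uniformSphere, Measure.restrict_eq_zero.mpr h, smul_zero]
      · rw [hσ, uniformSphere, h, ENNReal.inv_top, zero_smul]
    intro p hp
    exfalso
    have hpos := hp Set.univ isOpen_univ (Set.mem_univ p)
    have hγ0 : γ Set.univ = 0 := by
      rw [← Measure.fst_univ, hfst, hσ0]; rfl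
    rw [hγ0] at hpos
    exact lt_irrefl 0 hpos
  push_neg at hdeg
  obtain ⟨hc0, hcT⟩ := hdeg
  have hSmeas : MeasurableSet S := Metric.isClosed_sphere.measurableSet
  have hσuniv : σ Set.univ = 1 := by
    rw [hσ, uniformSphere, Measure.smul_apply, Measure.restrict_apply_univ, smul_eq_mul,
      ENNReal.inv_mul_cancel hc0 hcT]
  have hσfin : σ Set.univ ≠ ⊤ := by rw [hσuniv]; exact ENNReal.one_ne_top
  have hσcompl : σ Sᶜ = 0 := by
    rw [hσ, uniformSphere, Measure.smul_apply, Measure.restrict_apply hSmeas.compl,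
      Set.compl_inter_self, measure_empty, smul_eq_mul, mul_zero]
  have hR0 : (0 : ℝ) < R := hr.trans hrR
  have h0K : (0 : EuclideanSpace ℝ (Fin d)) ∈ K := hKr (Metric.mem_closedBall_self hr.le)
  -- maximizer selection
  have hex : ∀ n : EuclideanSpace ℝ (Fin d), ∃ x ∈ K, ∀ y ∈ K, ⟪n, y⟫ ≤ ⟪n, x⟫ := by
    intro n
    have hco : ContinuousOn (fun y : EuclideanSpace ℝ (Fin d) => ⟪n, y⟫) K :=
      (continuous_const.inner continuous_id).continuousOn
    obtain ⟨x, hxK, hx⟩ := hKcpt.exists_isMaxOn ⟨0, h0K⟩ hco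
    exact ⟨x, hxK, fun y hy => hx hy⟩
  choose m hmK hmmax using hex
  have hmR : ∀ n, ‖m n‖ ≤ R := by
    intro n
    have := hKR (hmK n)
    rwa [mem_closedBall_zero_iff] at this
  -- support function h n = ⟪n, m n⟫ is Lipschitz hence measurable
  have hlip : LipschitzWith (Real.toNNReal R) (fun n => ⟪n, m n⟫) := by
    apply LipschitzWith.of_dist_le_mul
    intro n n'
    rw [Real.dist_eq, Real.coe_toNNReal R hR0.le, abs_sub_le_iff]
    constructor
    · have h1 : ⟪n', m n⟫ ≤ ⟪n', m n'⟫ := hmmax n' _ (hmK n)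
      have h2 : ⟪n, m n⟫ - ⟪n', m n⟫ = ⟪n - n', m n⟫ := (inner_sub_left _ _ _).symm
      have h3 : ⟪n - n', m n⟫ ≤ ‖n - n'‖ * ‖m n‖ := real_inner_le_norm _ _
      have h4 : ‖n - n'‖ * ‖m n‖ ≤ ‖n - n'‖ * R :=
        mul_le_mul_of_nonneg_left (hmR n) (norm_nonneg _)
      have h5 : dist n n' = ‖n - n'‖ := dist_eq_norm _ _
      nlinarith [h1, h2, h3, h4]
    · have h1 : ⟪n, m n'⟫ ≤ ⟪n, m n⟫ := hmmax n _ (hmK n')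
      have h2 : ⟪n', m n'⟫ - ⟪n, m n'⟫ = ⟪n' - n, m n'⟫ := (inner_sub_left _ _ _).symm
      have h3 : ⟪n' - n, m n'⟫ ≤ ‖n' - n‖ * ‖m n'‖ := real_inner_le_norm _ _
      have h4 : ‖n' - n‖ * ‖m n'‖ ≤ ‖n' - n‖ * R :=
        mul_le_mul_of_nonneg_left (hmR n') (norm_nonneg _)
      have h5 : dist n n' = ‖n' - n‖ := by rw [dist_comm]; exact dist_eq_norm _ _
      nlinarith [h1, h2, h3, h4]
  have hmeas_h : Measurable (fun n => ⟪n, m n⟫) := hlip.continuous.measurable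
  have hhr : ∀ n : EuclideanSpace ℝ (Fin d), ‖n‖ = 1 → r ≤ ⟪n, m n⟫ := by
    intro n hn
    have hrn : r • n ∈ K := by
      apply hKr
      rw [mem_closedBall_zero_iff, norm_smul, hn, mul_one]
      exact (abs_of_pos hr).le
    have := hmmax n _ hrn
    rwa [real_inner_smul_right, real_inner_self_eq_norm_mul_norm, hn, one_mul, mul_one] at this
  have hhnorm : ∀ n : EuclideanSpace ℝ (Fin d), ‖n‖ = 1 → ⟪n, m n⟫ ≤ ‖m n‖ := by
    intro n hn
    have := real_inner_le_norm n (m n)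
    rwa [hn, one_mul] at this
  -- the multivalued inverse Gauss map
  set W : Set (EuclideanSpace ℝ (Fin d)) → Set (EuclideanSpace ℝ (Fin d)) :=
    fun A => {n | ∃ x ∈ A, ‖x‖ = 1 ∧ ∀ y ∈ K, ⟪n, y⟫ ≤ radialFn K x * ⟪n, x⟫} with hW
  have hνW : ∀ A : Set (EuclideanSpace ℝ (Fin d)), MeasurableSet A → ν A = σ (W A) :=
    fun A hA => hν A hA
  have hWu : ∀ A B : Set (EuclideanSpace ℝ (Fin d)), W (A ∪ B) = W A ∪ W B := by
    intro A B
    ext n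
    simp only [hW, Set.mem_setOf_eq, Set.mem_union]
    constructor
    · rintro ⟨x, hx | hx, hrest⟩
      exacts [Or.inl ⟨x, hx, hrest⟩, Or.inr ⟨x, hx, hrest⟩]
    · rintro (⟨x, hx, hrest⟩ | ⟨x, hx, hrest⟩)
      exacts [⟨x, Or.inl hx, hrest⟩, ⟨x, Or.inr hx, hrest⟩]
  have hWdisj : ∀ A B : Set (EuclideanSpace ℝ (Fin d)), MeasurableSet A → MeasurableSet B →
      Disjoint A B → σ (W A ∩ W B) = 0 := by
    intro A B hA hB hd
    refine null_inter_of_additive σ hσfin _ _ ?_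
    have hadd : σ (W A) + σ (W B) = σ (W A ∪ W B) := by
      rw [← hνW A hA, ← hνW B hB, ← hWu, ← hνW _ (hA.union hB)]
      exact (measure_union hd hB).symm
    exact hadd.le
  -- countable dense family of separating pairs of closed balls
  obtain ⟨D, hDc, hDd⟩ := TopologicalSpace.exists_countable_dense (EuclideanSpace ℝ (Fin d))
  set P : Set (EuclideanSpace ℝ (Fin d) × EuclideanSpace ℝ (Fin d) × ℚ) :=
    {z | z.1 ∈ D ∧ z.2.1 ∈ D ∧ 0 < z.2.2 ∧ (2 * z.2.2 : ℝ) < dist z.1 z.2.1} with hP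
  have hPc : P.Countable := by
    have hsub : P ⊆ D ×ˢ D ×ˢ (Set.univ : Set ℚ) :=
      fun z hz => ⟨hz.1, hz.2.1, Set.mem_univ _⟩
    exact (hDc.prod (hDc.prod Set.countable_univ)).mono hsub
  set Bad : Set (EuclideanSpace ℝ (Fin d)) :=
    ⋃ z ∈ P, toMeasurable σ (W (Metric.closedBall z.1 (z.2.2 : ℝ)) ∩
      W (Metric.closedBall z.2.1 (z.2.2 : ℝ))) with hBad
  have hBadm : MeasurableSet Bad :=
    MeasurableSet.biUnion hPc (fun z _ => measurableSet_toMeasurable σ _)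
  have hBadnull : σ Bad = 0 := by
    refine (measure_biUnion_null_iff hPc).mpr (fun z hz => ?_)
    rw [measure_toMeasurable]
    refine hWdisj _ _ measurableSet_closedBall measurableSet_closedBall ?_
    refine Metric.closedBall_disjoint_closedBall ?_
    have := hz.2.2.2
    linarith
  have hcover : ∀ u₁ u₂ : EuclideanSpace ℝ (Fin d), u₁ ≠ u₂ →
      ∃ z ∈ P, u₁ ∈ Metric.closedBall z.1 (z.2.2 : ℝ) ∧
        u₂ ∈ Metric.closedBall z.2.1 (z.2.2 : ℝ) := by
    intro u₁ u₂ hne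
    set δ := dist u₁ u₂ with hδ
    have hδ0 : 0 < δ := dist_pos.mpr hne
    obtain ⟨q, hq1, hq2⟩ := exists_rat_btwn (show δ / 8 < δ / 4 by linarith)
    obtain ⟨c₁, hc₁⟩ := Metric.dense_iff.mp hDd u₁ (δ / 8) (by linarith)
    obtain ⟨c₂, hc₂⟩ := Metric.dense_iff.mp hDd u₂ (δ / 8) (by linarith)
    have hd₁ : dist c₁ u₁ < δ / 8 := Metric.mem_ball.mp hc₁.1
    have hd₂ : dist c₂ u₂ < δ / 8 := Metric.mem_ball.mp hc₂.1
    have hq0 : 0 < q := by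
      have : (0 : ℝ) < q := lt_trans (by linarith) hq1
      exact_mod_cast this
    have hcc : (2 * q : ℝ) < dist c₁ c₂ := by
      have htri : dist u₁ u₂ ≤ dist u₁ c₁ + dist c₁ c₂ + dist c₂ u₂ := dist_triangle4 _ _ _ _
      have e1 : dist u₁ c₁ = dist c₁ u₁ := dist_comm _ _
      linarith
    refine ⟨(c₁, c₂, q), ⟨hc₁.2, hc₂.2, hq0, hcc⟩, ?_, ?_⟩
    · rw [Metric.mem_closedBall, dist_comm]
      linarith
    · rw [Metric.mem_closedBall, dist_comm]
      linarith
  -- the good set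
  set Good : Set (EuclideanSpace ℝ (Fin d)) := S \ Bad with hGood
  have hGoodm : MeasurableSet Good := hSmeas.diff hBadm
  have hGoodc : σ Goodᶜ = 0 := by
    have hsub : Goodᶜ ⊆ Sᶜ ∪ Bad := by
      rw [hGood, Set.diff_eq, Set.compl_inter, compl_compl]
    exact measure_mono_null hsub (measure_union_null hσcompl hBadnull)
  -- the normal map sends a maximizer to the radial function value
  have hρnorm : ∀ (n x : EuclideanSpace ℝ (Fin d)), ‖n‖ = 1 → x ∈ K →
      (∀ y ∈ K, ⟪n, y⟫ ≤ ⟪n, x⟫) → r ≤ ⟪n, x⟫ → radialFn K (‖x‖⁻¹ • x) = ‖x‖ := by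
    intro n x hn hxK hmx hrx
    have hx0 : 0 < ‖x‖ := by
      have h1 : ⟪n, x⟫ ≤ ‖x‖ := by
        have := real_inner_le_norm n x
        rwa [hn, one_mul] at this
      linarith
    have hu : ‖‖x‖⁻¹ • x‖ = 1 := by
      rw [norm_smul, norm_inv, norm_norm, inv_mul_cancel₀ hx0.ne']
    refine radial_eq_of_max (n := n) hKcpt.isClosed hr hKr hKR hu ?_ ?_ ?_
    · rw [smul_smul, mul_inv_cancel₀ hx0.ne', one_smul]; exact hxK
    · intro y hy
      rw [smul_smul, mul_inv_cancel₀ hx0.ne', one_smul]; exact hmx y hy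
    · rw [real_inner_smul_right]
      exact mul_pos (inv_pos.mpr hx0) (lt_of_lt_of_le hr hrx)
  have hWmem : ∀ (n x : EuclideanSpace ℝ (Fin d)), ‖n‖ = 1 → x ∈ K →
      (∀ y ∈ K, ⟪n, y⟫ ≤ ⟪n, x⟫) → r ≤ ⟪n, x⟫ →
      ∀ B : Set (EuclideanSpace ℝ (Fin d)), ‖x‖⁻¹ • x ∈ B → n ∈ W B := by
    intro n x hn hxK hmx hrx B hB
    have hx0 : 0 < ‖x‖ := by
      have h1 : ⟪n, x⟫ ≤ ‖x‖ := by
        have := real_inner_le_norm n x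
        rwa [hn, one_mul] at this
      linarith
    have hu : ‖‖x‖⁻¹ • x‖ = 1 := by
      rw [norm_smul, norm_inv, norm_norm, inv_mul_cancel₀ hx0.ne']
    refine ⟨‖x‖⁻¹ • x, hB, hu, fun y hy => ?_⟩
    rw [hρnorm n x hn hxK hmx hrx, real_inner_smul_right, ← mul_assoc,
      mul_inv_cancel₀ hx0.ne', one_mul]
    exact hmx y hy
  -- uniqueness of maximizers on the good set
  have huniq : ∀ n ∈ Good, ∀ x₁ ∈ K, ∀ x₂ ∈ K,
      (∀ y ∈ K, ⟪n, y⟫ ≤ ⟪n, x₁⟫) → (∀ y ∈ K, ⟪n, y⟫ ≤ ⟪n, x₂⟫) → x₁ = x₂ := by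
    rintro n ⟨hnS, hnB⟩ x₁ hx₁ x₂ hx₂ hm₁ hm₂
    by_contra hne
    have hnn : ‖n‖ = 1 := mem_sphere_zero_iff_norm.mp hnS
    have heq : ⟪n, x₁⟫ = ⟪n, x₂⟫ := le_antisymm (hm₂ _ hx₁) (hm₁ _ hx₂)
    have hval : r ≤ ⟪n, x₁⟫ := by
      have hrn : r • n ∈ K := by
        apply hKr
        rw [mem_closedBall_zero_iff, norm_smul, hnn, mul_one]
        exact (abs_of_pos hr).le
      have := hm₁ _ hrn
      rwa [real_inner_smul_right, real_inner_self_eq_norm_mul_norm, hnn, one_mul,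
        mul_one] at this
    have hval₂ : r ≤ ⟪n, x₂⟫ := heq ▸ hval
    have hx₁n : 0 < ‖x₁‖ := by
      have h1 : ⟪n, x₁⟫ ≤ ‖x₁‖ := by
        have := real_inner_le_norm n x₁
        rwa [hnn, one_mul] at this
      linarith
    have hx₂n : 0 < ‖x₂‖ := by
      have h1 : ⟪n, x₂⟫ ≤ ‖x₂‖ := by
        have := real_inner_le_norm n x₂
        rwa [hnn, one_mul] at this
      linarith
    have hune : ‖x₁‖⁻¹ • x₁ ≠ ‖x₂‖⁻¹ • x₂ := by
      intro hEq
      apply hne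
      have hinner : ‖x₁‖⁻¹ * ⟪n, x₁⟫ = ‖x₂‖⁻¹ * ⟪n, x₂⟫ := by
        calc ‖x₁‖⁻¹ * ⟪n, x₁⟫ = ⟪n, ‖x₁‖⁻¹ • x₁⟫ := (real_inner_smul_right _ _ _).symm
          _ = ⟪n, ‖x₂‖⁻¹ • x₂⟫ := by rw [hEq]
          _ = ‖x₂‖⁻¹ * ⟪n, x₂⟫ := real_inner_smul_right _ _ _
      have hninv : ‖x₁‖⁻¹ = ‖x₂‖⁻¹ := by
        rw [heq] at hinner
        exact mul_right_cancel₀ (lt_of_lt_of_le hr hval₂).ne' hinner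
      have hnorms : ‖x₁‖ = ‖x₂‖ := by
        have := congrArg (fun t : ℝ => t⁻¹) hninv
        simpa using this
      calc x₁ = ‖x₁‖ • (‖x₁‖⁻¹ • x₁) := by
            rw [smul_smul, mul_inv_cancel₀ hx₁n.ne', one_smul]
        _ = ‖x₂‖ • (‖x₂‖⁻¹ • x₂) := by rw [hEq, hnorms]
        _ = x₂ := by rw [smul_smul, mul_inv_cancel₀ hx₂n.ne', one_smul]
    obtain ⟨z, hzP, hz1, hz2⟩ := hcover _ _ hune
    apply hnB
    rw [hBad]
    refine Set.mem_biUnion hzP (subset_toMeasurable σ _ ⟨?_, ?_⟩)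
    · exact hWmem n x₁ hnn hx₁ hm₁ hval _ hz1
    · exact hWmem n x₂ hnn hx₂ hm₂ hval₂ _ hz2
  -- a point of the sphere (junk value)
  have hSne : S.Nonempty := by
    by_contra hS0
    rw [Set.not_nonempty_iff_eq_empty] at hS0
    exact hc0 (by rw [hS0]; exact measure_empty)
  obtain ⟨e, heS⟩ := hSne
  -- the maximizer graph
  set Gm : Set (EuclideanSpace ℝ (Fin d) × EuclideanSpace ℝ (Fin d)) :=
    {p | p.2 ∈ K ∧ ∀ y ∈ K, ⟪p.1, y⟫ ≤ ⟪p.1, p.2⟫} with hGm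
  have hGmcl : IsClosed Gm := by
    have h1 : IsClosed {p : EuclideanSpace ℝ (Fin d) × EuclideanSpace ℝ (Fin d) | p.2 ∈ K} :=
      hKcpt.isClosed.preimage continuous_snd
    have h2 : IsClosed {p : EuclideanSpace ℝ (Fin d) × EuclideanSpace ℝ (Fin d) |
        ∀ y ∈ K, ⟪p.1, y⟫ ≤ ⟪p.1, p.2⟫} := by
      have heq : {p : EuclideanSpace ℝ (Fin d) × EuclideanSpace ℝ (Fin d) |
          ∀ y ∈ K, ⟪p.1, y⟫ ≤ ⟪p.1, p.2⟫} =
          ⋂ y ∈ K, {p : EuclideanSpace ℝ (Fin d) × EuclideanSpace ℝ (Fin d) |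
            ⟪p.1, y⟫ ≤ ⟪p.1, p.2⟫} := by
        ext p; simp
      rw [heq]
      exact isClosed_biInter (fun y hy =>
        isClosed_le (continuous_fst.inner continuous_const) (continuous_fst.inner continuous_snd))
    exact h1.inter h2
  -- the measurable selection
  set mG : EuclideanSpace ℝ (Fin d) → EuclideanSpace ℝ (Fin d) :=
    Good.piecewise m (fun _ => e) with hmG
  have hmGmeas : Measurable mG := by
    apply measurable_of_isClosed
    intro C hC
    have hproj : IsClosed (Prod.fst '' (Gm ∩ (Set.univ ×ˢ C))) :=
      isClosed_proj_fst (hGmcl.inter (isClosed_univ.prod hC)) hKcpt (fun p hp => hp.1.1)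
    have hiff : ∀ n ∈ Good, (mG n ∈ C ↔ n ∈ Prod.fst '' (Gm ∩ (Set.univ ×ˢ C))) := by
      intro n hn
      rw [hmG, Set.piecewise_eq_of_mem _ _ _ hn]
      constructor
      · intro hmn
        exact ⟨(n, m n), ⟨⟨hmK n, hmmax n⟩, ⟨Set.mem_univ _, hmn⟩⟩, rfl⟩
      · rintro ⟨p, ⟨⟨hpK, hpmax⟩, ⟨-, hpC⟩⟩, hp1⟩
        have hps : p = (p.1, p.2) := rfl
        rw [show p.1 = n from hp1] at hpmax
        have : p.2 = m n := huniq n hn p.2 hpK (m n) (hmK n) hpmax (hmmax n)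
        rwa [this] at hpC
    by_cases heC : e ∈ C
    · have hset : mG ⁻¹' C = (Good ∩ Prod.fst '' (Gm ∩ (Set.univ ×ˢ C))) ∪ Goodᶜ := by
        ext n
        by_cases hn : n ∈ Good
        · simp only [Set.mem_preimage, Set.mem_union, Set.mem_inter_iff, hn, true_and,
            Set.mem_compl_iff, not_true, or_false]
          exact hiff n hn
        · simp only [Set.mem_preimage, hmG, Set.piecewise_eq_of_notMem _ _ _ hn,
            Set.mem_union, Set.mem_inter_iff, hn, false_and, Set.mem_compl_iff,
            not_false_iff, or_true, iff_true]
          exact heC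
      rw [hset]
      exact (hGoodm.inter hproj.measurableSet).union hGoodm.compl
    · have hset : mG ⁻¹' C = Good ∩ Prod.fst '' (Gm ∩ (Set.univ ×ˢ C)) := by
        ext n
        by_cases hn : n ∈ Good
        · simp only [Set.mem_preimage, Set.mem_inter_iff, hn, true_and]
          exact hiff n hn
        · simp only [Set.mem_preimage, hmG, Set.piecewise_eq_of_notMem _ _ _ hn,
            Set.mem_inter_iff, hn, false_and, iff_false]
          exact heC
      rw [hset]
      exact hGoodm.inter hproj.measurableSet
  -- the selected direction map
  set stilde : EuclideanSpace ℝ (Fin d) → EuclideanSpace ℝ (Fin d) :=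
    Good.piecewise (fun n => ‖mG n‖⁻¹ • mG n) (fun _ => e) with hstilde
  have hsmeas : Measurable stilde := by
    refine Measurable.piecewise hGoodm ?_ measurable_const
    exact (hmGmeas.norm.inv).smul hmGmeas
  have hst_eq : ∀ n ∈ Good, stilde n = ‖m n‖⁻¹ • m n := by
    intro n hn
    rw [hstilde, Set.piecewise_eq_of_mem _ _ _ hn, hmG, Set.piecewise_eq_of_mem _ _ _ hn]
  -- basic facts on the good set
  have hGoodfacts : ∀ n ∈ Good, ‖n‖ = 1 ∧ r ≤ ⟪n, m n⟫ ∧ 0 < ‖m n‖ := by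
    intro n hn
    have hnn : ‖n‖ = 1 := mem_sphere_zero_iff_norm.mp hn.1
    have h1 := hhr n hnn
    have h2 := hhnorm n hnn
    exact ⟨hnn, h1, by linarith⟩
  have hst_unit : ∀ n ∈ Good, ‖stilde n‖ = 1 := by
    intro n hn
    obtain ⟨hnn, h1, h2⟩ := hGoodfacts n hn
    rw [hst_eq n hn, norm_smul, norm_inv, norm_norm, inv_mul_cancel₀ h2.ne']
  have hst_rad : ∀ n ∈ Good, radialFn K (stilde n) = ‖m n‖ := by
    intro n hn
    obtain ⟨hnn, h1, h2⟩ := hGoodfacts n hn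
    rw [hst_eq n hn]
    exact hρnorm n (m n) hnn (hmK n) (hmmax n) h1
  have hst_inner : ∀ n ∈ Good, ⟪n, stilde n⟫ = ‖m n‖⁻¹ * ⟪n, m n⟫ := by
    intro n hn
    rw [hst_eq n hn, real_inner_smul_right]
  -- the key equivalence : stilde represents the multivalued map on Good
  have hWiff : ∀ n ∈ Good, ∀ A : Set (EuclideanSpace ℝ (Fin d)), (n ∈ W A ↔ stilde n ∈ A) := by
    intro n hn A
    obtain ⟨hnn, h1, h2⟩ := hGoodfacts n hn
    constructor
    · rintro ⟨x, hxA, hx1, hcond⟩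
      have hρx := radial_facts hKcpt.isClosed hr hKr hKR hx1
      obtain ⟨hρr, hρR, hρK, -⟩ := hρx
      have hmaxx : ∀ y ∈ K, ⟪n, y⟫ ≤ ⟪n, radialFn K x • x⟫ := by
        intro y hy
        rw [real_inner_smul_right]
        exact hcond y hy
      have hpx : radialFn K x • x = m n :=
        huniq n hn _ hρK (m n) (hmK n) hmaxx (hmmax n)
      have hnx : ‖radialFn K x • x‖ = radialFn K x := by
        rw [norm_smul, hx1, mul_one, Real.norm_eq_abs, abs_of_pos (lt_of_lt_of_le hr hρr)]
      have : stilde n = x := by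
        rw [hst_eq n hn, ← hpx, hnx, smul_smul,
          inv_mul_cancel₀ (lt_of_lt_of_le hr hρr).ne', one_smul]
      rwa [this]
    · intro hxA
      have := hWmem n (m n) hnn (hmK n) (hmmax n) h1 A (by rwa [← hst_eq n hn])
      exact this
  -- the competitor plan γ'
  set γ' : Measure (EuclideanSpace ℝ (Fin d) × EuclideanSpace ℝ (Fin d)) :=
    σ.map (fun n => (n, stilde n)) with hγ'def
  have hpairmeas : Measurable (fun n : EuclideanSpace ℝ (Fin d) => (n, stilde n)) :=
    measurable_id.prodMk hsmeas
  have haeG : ∀ᵐ n ∂σ, n ∈ Good := by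
    rw [MeasureTheory.ae_iff]
    exact hGoodc
  have hγ'fst : γ'.fst = σ := by
    rw [hγ'def, Measure.fst_map_prodMk (X := fun n => n) (Y := stilde) hsmeas, Measure.map_id']
  have hγ'snd : γ'.snd = ν := by
    ext A hA
    rw [hγ'def, Measure.snd_map_prodMk (X := fun n => n) (Y := stilde) measurable_id, Measure.map_apply hsmeas hA, hνW A hA]
    refine measure_congr ?_
    rw [Filter.eventuallyEq_set]
    filter_upwards [haeG] with n hn
    rw [Set.mem_preimage]
    exact (hWiff n hn A).symm
  -- measurability of the radial function
  have hrad0 : radialFn K 0 = 0 := by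
    have huniv : {s : ℝ | s • (0 : EuclideanSpace ℝ (Fin d)) ∈ K} = Set.univ := by
      ext s; simp [smul_zero, h0K]
    rw [radialFn, huniv, Real.sSup_univ]
  have hradnn : ∀ x : EuclideanSpace ℝ (Fin d), 0 ≤ radialFn K x := by
    intro x
    by_cases hx : x = 0
    · rw [hx, hrad0]
    · have hxn : 0 < ‖x‖ := norm_pos_iff.mpr hx
      have hbdd : BddAbove {s : ℝ | s • x ∈ K} := by
        refine ⟨R / ‖x‖, fun s hs => ?_⟩
        have := hKR hs
        rw [mem_closedBall_zero_iff, norm_smul] at this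
        calc s ≤ |s| := le_abs_self s
          _ ≤ R / ‖x‖ := by
            rw [le_div_iff₀ hxn]
            exact this
      refine le_csSup hbdd ?_
      show (0 : ℝ) • x ∈ K
      rw [zero_smul]; exact h0K
  have hradmeas : Measurable (radialFn K) := by
    apply measurable_of_Ioi
    intro t
    rcases lt_or_ge t 0 with ht | ht
    · have huniv : radialFn K ⁻¹' Set.Ioi t = Set.univ := by
        ext x
        simp only [Set.mem_preimage, Set.mem_Ioi, Set.mem_univ, iff_true]
        exact lt_of_lt_of_le ht (hradnn x)
      rw [huniv]; exact MeasurableSet.univ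
    · have hset : radialFn K ⁻¹' Set.Ioi t =
          ⋃ q : ℚ, ({x : EuclideanSpace ℝ (Fin d) | t < (q : ℝ)} ∩
            ({x : EuclideanSpace ℝ (Fin d) | (q : ℝ) • x ∈ K} ∩ {(0 : EuclideanSpace ℝ (Fin d))}ᶜ)) := by
        ext x
        simp only [Set.mem_preimage, Set.mem_Ioi, Set.mem_iUnion, Set.mem_inter_iff,
          Set.mem_setOf_eq, Set.mem_compl_iff, Set.mem_singleton_iff]
        constructor
        · intro hx
          have hx0 : x ≠ 0 := by
            rintro rfl
            rw [hrad0] at hx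
            exact absurd hx (not_lt.mpr ht)
          have hxn : 0 < ‖x‖ := norm_pos_iff.mpr hx0
          have hbdd : BddAbove {s : ℝ | s • x ∈ K} := by
            refine ⟨R / ‖x‖, fun s hs => ?_⟩
            have := hKR hs
            rw [mem_closedBall_zero_iff, norm_smul] at this
            calc s ≤ |s| := le_abs_self s
              _ ≤ R / ‖x‖ := by
                rw [le_div_iff₀ hxn]
                exact this
          have hne : Set.Nonempty {s : ℝ | s • x ∈ K} := by
            refine ⟨0, ?_⟩
            show (0 : ℝ) • x ∈ K
            rw [zero_smul]; exact h0K
          have hcl : IsClosed {s : ℝ | s • x ∈ K} :=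
            hKcpt.isClosed.preimage (continuous_id.smul continuous_const)
          have hρmem : radialFn K x • x ∈ K := hcl.csSup_mem hne hbdd
          have hρpos : 0 < radialFn K x := lt_of_le_of_lt ht hx
          obtain ⟨q, hq1, hq2⟩ := exists_rat_btwn hx
          refine ⟨q, hq1, ?_, hx0⟩
          -- q • x ∈ K by convexity
          have hq0 : (0 : ℝ) ≤ q := le_trans ht hq1.le
          have hθ0 : (0 : ℝ) ≤ (q : ℝ) / radialFn K x := by positivity
          have hθ1 : (q : ℝ) / radialFn K x ≤ 1 := by
            rw [div_le_one hρpos]; exact hq2.le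
          have := hKconv h0K hρmem (by linarith : (0:ℝ) ≤ 1 - (q : ℝ) / radialFn K x) hθ0
            (by ring)
          have heq : (1 - (q : ℝ) / radialFn K x) • (0 : EuclideanSpace ℝ (Fin d)) +
              ((q : ℝ) / radialFn K x) • (radialFn K x • x) = (q : ℝ) • x := by
            rw [smul_zero, zero_add, smul_smul, div_mul_cancel₀ _ hρpos.ne']
          rwa [heq] at this
        · rintro ⟨q, hq1, hqK, hx0⟩
          have hxn : 0 < ‖x‖ := norm_pos_iff.mpr hx0
          have hbdd : BddAbove {s : ℝ | s • x ∈ K} := by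
            refine ⟨R / ‖x‖, fun s hs => ?_⟩
            have := hKR hs
            rw [mem_closedBall_zero_iff, norm_smul] at this
            calc s ≤ |s| := le_abs_self s
              _ ≤ R / ‖x‖ := by
                rw [le_div_iff₀ hxn]
                exact this
          exact lt_of_lt_of_le hq1 (le_csSup hbdd hqK)
      rw [hset]
      refine MeasurableSet.iUnion (fun q => ?_)
      refine (MeasurableSet.const _).inter (MeasurableSet.inter ?_ ?_)
      · exact (hKcpt.isClosed.preimage ((continuous_const (y := ((q : ℚ) : ℝ))).smul continuous_id)).measurableSet
      · exact (measurableSet_singleton 0).compl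
  -- the potentials
  set M : ℝ := Real.log R - Real.log r with hM
  have hM0 : 0 ≤ M := by
    rw [hM, sub_nonneg]
    exact (Real.log_le_log_iff hr hR0).mpr hrR.le
  set α : EuclideanSpace ℝ (Fin d) → ℝ :=
    fun n => min M (max 0 (Real.log R - Real.log ⟪n, m n⟫)) with hα
  set β : EuclideanSpace ℝ (Fin d) → ℝ :=
    fun x => min M (max 0 (Real.log (radialFn K x) - Real.log r)) with hβ
  have hαmeas : Measurable α :=
    measurable_const.min (measurable_const.max
      (measurable_const.sub (Real.measurable_log.comp hmeas_h)))
  have hβmeas : Measurable β :=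
    measurable_const.min (measurable_const.max
      ((Real.measurable_log.comp hradmeas).sub measurable_const))
  have hαm' : Measurable (fun n => ENNReal.ofReal (α n)) := hαmeas.ennreal_ofReal
  have hβm' : Measurable (fun x => ENNReal.ofReal (β x)) := hβmeas.ennreal_ofReal
  -- cost measurability
  have hipc : Continuous (fun p : EuclideanSpace ℝ (Fin d) × EuclideanSpace ℝ (Fin d) =>
      (⟪p.1, p.2⟫ : ℝ)) := continuous_inner
  have hcostm : Measurable (fun p : EuclideanSpace ℝ (Fin d) × EuclideanSpace ℝ (Fin d) =>
      gaussCost p.1 p.2) := by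
    simp only [gaussCost]
    refine Measurable.ite ?_ measurable_const ?_
    · exact measurableSet_le hipc.measurable measurable_const
    · exact ((Real.measurable_log.comp hipc.measurable).neg).ennreal_ofReal
  -- marginal integration helpers
  have lmarg_fst : ∀ (μp : Measure (EuclideanSpace ℝ (Fin d) × EuclideanSpace ℝ (Fin d)))
      (F : EuclideanSpace ℝ (Fin d) → ENNReal), Measurable F →
      ∫⁻ n, F n ∂μp.fst = ∫⁻ p, F p.1 ∂μp := by
    intro μp F hF
    rw [Measure.fst, lintegral_map hF measurable_fst]
  have lmarg_snd : ∀ (μp : Measure (EuclideanSpace ℝ (Fin d) × EuclideanSpace ℝ (Fin d)))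
      (F : EuclideanSpace ℝ (Fin d) → ENNReal), Measurable F →
      ∫⁻ n, F n ∂μp.snd = ∫⁻ p, F p.2 ∂μp := by
    intro μp F hF
    rw [Measure.snd, lintegral_map hF measurable_snd]
  -- upper bound : on the graph the cost is exactly the sum of potentials
  have hup : ∀ᵐ n ∂σ, gaussCost n (stilde n) + ENNReal.ofReal M =
      ENNReal.ofReal (α n) + ENNReal.ofReal (β (stilde n)) := by
    filter_upwards [haeG] with n hn
    obtain ⟨hnn, hhr', hm0⟩ := hGoodfacts n hn
    have hhR' : ⟪n, m n⟫ ≤ ‖m n‖ := hhnorm n hnn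
    have hmnR : ‖m n‖ ≤ R := hmR n
    have hh0 : 0 < ⟪n, m n⟫ := lt_of_lt_of_le hr hhr'
    have hip : ⟪n, stilde n⟫ = ‖m n‖⁻¹ * ⟪n, m n⟫ := hst_inner n hn
    have hip0 : 0 < ⟪n, stilde n⟫ := by
      rw [hip]; positivity
    have hcost : gaussCost n (stilde n) =
        ENNReal.ofReal (Real.log ‖m n‖ - Real.log ⟪n, m n⟫) := by
      rw [gaussCost, if_neg (not_le.mpr hip0)]
      congr 1
      rw [hip, Real.log_mul (inv_ne_zero hm0.ne') hh0.ne', Real.log_inv]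
      ring
    have hα_eq : α n = Real.log R - Real.log ⟪n, m n⟫ := by
      simp only [hα]
      have h1 : (0 : ℝ) ≤ Real.log R - Real.log ⟪n, m n⟫ := by
        rw [sub_nonneg]
        exact (Real.log_le_log_iff hh0 hR0).mpr (hhR'.trans hmnR)
      have h2 : Real.log R - Real.log ⟪n, m n⟫ ≤ M := by
        rw [hM]
        have := (Real.log_le_log_iff hr hh0).mpr hhr'
        linarith
      rw [max_eq_right h1, min_eq_right h2]
    have hβ_eq : β (stilde n) = Real.log ‖m n‖ - Real.log r := by
      simp only [hβ, hst_rad n hn]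
      have hmr : r ≤ ‖m n‖ := hhr'.trans hhR'
      have h1 : (0 : ℝ) ≤ Real.log ‖m n‖ - Real.log r := by
        rw [sub_nonneg]
        exact (Real.log_le_log_iff hr hm0).mpr hmr
      have h2 : Real.log ‖m n‖ - Real.log r ≤ M := by
        rw [hM]
        have := (Real.log_le_log_iff hm0 hR0).mpr hmnR
        linarith
      rw [max_eq_right h1, min_eq_right h2]
    rw [hcost, hα_eq, hβ_eq]

    have e1 : (0:ℝ) ≤ Real.log ‖m n‖ - Real.log ⟪n, m n⟫ := by
      rw [sub_nonneg]
      exact (Real.log_le_log_iff hh0 hm0).mpr hhR'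
    have e2 : (0:ℝ) ≤ Real.log R - Real.log ⟪n, m n⟫ := by
      rw [sub_nonneg]
      exact (Real.log_le_log_iff hh0 hR0).mpr (hhR'.trans hmnR)
    have e3 : (0:ℝ) ≤ Real.log ‖m n‖ - Real.log r := by
      rw [sub_nonneg]
      exact (Real.log_le_log_iff hr hm0).mpr (hhr'.trans hhR')
    rw [← ENNReal.ofReal_add e1 hM0, ← ENNReal.ofReal_add e2 e3]
    congr 1
    rw [hM]; ring
  -- integrals of the potentials
  set IA : ENNReal := ∫⁻ n, ENNReal.ofReal (α n) ∂σ with hIA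
  set IB : ENNReal := ∫⁻ x, ENNReal.ofReal (β x) ∂ν with hIB
  have hIAle : IA ≤ ENNReal.ofReal M := by
    rw [hIA]
    calc ∫⁻ n, ENNReal.ofReal (α n) ∂σ ≤ ∫⁻ _, ENNReal.ofReal M ∂σ :=
          lintegral_mono (fun n => ENNReal.ofReal_le_ofReal (min_le_left _ _))
      _ = ENNReal.ofReal M := by rw [lintegral_const, hσuniv, mul_one]
  have hνuniv : ν Set.univ ≤ 1 := by
    rw [hνW _ MeasurableSet.univ]
    exact le_trans (measure_mono (Set.subset_univ _)) hσuniv.le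
  have hIBle : IB ≤ ENNReal.ofReal M := by
    rw [hIB]
    calc ∫⁻ x, ENNReal.ofReal (β x) ∂ν ≤ ∫⁻ _, ENNReal.ofReal M ∂ν :=
          lintegral_mono (fun x => ENNReal.ofReal_le_ofReal (min_le_left _ _))
      _ = ENNReal.ofReal M * ν Set.univ := lintegral_const _
      _ ≤ ENNReal.ofReal M * 1 := mul_le_mul_right hνuniv _
      _ = ENNReal.ofReal M := mul_one _
  -- the sum of potentials integrates the same against any plan with the right marginals
  have hsum : ∀ μp : Measure (EuclideanSpace ℝ (Fin d) × EuclideanSpace ℝ (Fin d)),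
      μp.fst = σ → μp.snd = ν →
      ∫⁻ p, (ENNReal.ofReal (α p.1) + ENNReal.ofReal (β p.2)) ∂μp = IA + IB := by
    intro μp h1 h2
    rw [lintegral_add_left (show Measurable fun p : EuclideanSpace ℝ (Fin d) × EuclideanSpace ℝ (Fin d) => ENNReal.ofReal (α p.1) from hαm'.comp measurable_fst)]
    congr 1
    · rw [hIA, ← h1, lmarg_fst μp _ hαm']
    · rw [hIB, ← h2, lmarg_snd μp _ hβm']
  -- cost of the competitor plan
  have hIγ' : (∫⁻ p, gaussCost p.1 p.2 ∂γ') + ENNReal.ofReal M = IA + IB := by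
    have hL : ∫⁻ p, gaussCost p.1 p.2 ∂γ' = ∫⁻ n, gaussCost n (stilde n) ∂σ := by
      rw [hγ'def, lintegral_map hcostm hpairmeas]
    have hR' : ∫⁻ p, (ENNReal.ofReal (α p.1) + ENNReal.ofReal (β p.2)) ∂γ' =
        ∫⁻ n, (ENNReal.ofReal (α n) + ENNReal.ofReal (β (stilde n))) ∂σ := by
      rw [hγ'def, lintegral_map (show Measurable fun p : EuclideanSpace ℝ (Fin d) × EuclideanSpace ℝ (Fin d) => ENNReal.ofReal (α p.1) + ENNReal.ofReal (β p.2) from (hαm'.comp measurable_fst).add (hβm'.comp measurable_snd)) hpairmeas]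
    calc (∫⁻ p, gaussCost p.1 p.2 ∂γ') + ENNReal.ofReal M
        = ∫⁻ n, (gaussCost n (stilde n) + ENNReal.ofReal M) ∂σ := by
          rw [lintegral_add_right _ measurable_const, lintegral_const, hσuniv, mul_one, hL]
      _ = ∫⁻ n, (ENNReal.ofReal (α n) + ENNReal.ofReal (β (stilde n))) ∂σ :=
          lintegral_congr_ae hup
      _ = ∫⁻ p, (ENNReal.ofReal (α p.1) + ENNReal.ofReal (β p.2)) ∂γ' := hR'.symm
      _ = IA + IB := hsum γ' hγ'fst hγ'snd
  have hMne : ENNReal.ofReal M ≠ ⊤ := ENNReal.ofReal_ne_top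
  have hABne : IA + IB ≠ ⊤ := by
    intro hcon
    have : IA + IB ≤ ENNReal.ofReal M + ENNReal.ofReal M := add_le_add hIAle hIBle
    rw [hcon] at this
    exact (ENNReal.add_ne_top.mpr ⟨hMne, hMne⟩) (top_le_iff.mp this)
  have hIγ'fin : ∫⁻ p, gaussCost p.1 p.2 ∂γ' ≠ ⊤ := by
    intro hcon
    apply hABne
    rw [← hIγ', hcon, top_add]
  have hopt' := hopt γ' hγ'fst hγ'snd
  have hI1fin : ∫⁻ p, gaussCost p.1 p.2 ∂γ ≠ ⊤ := ne_top_of_le_ne_top hIγ'fin hopt'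
  have hγuniv : γ Set.univ = 1 := by
    rw [← Measure.fst_univ, hfst, hσuniv]
  -- γ-a.e. both coordinates are unit vectors
  have haeγ : ∀ᵐ p ∂γ, p.1 ∈ S ∧ p.2 ∈ S := by
    have h1 : γ {p : EuclideanSpace ℝ (Fin d) × EuclideanSpace ℝ (Fin d) | p.1 ∉ S} = 0 := by
      have he : {p : EuclideanSpace ℝ (Fin d) × EuclideanSpace ℝ (Fin d) | p.1 ∉ S} =
          Prod.fst ⁻¹' Sᶜ := rfl
      rw [he, ← Measure.fst_apply hSmeas.compl, hfst]
      exact hσcompl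
    have h2 : γ {p : EuclideanSpace ℝ (Fin d) × EuclideanSpace ℝ (Fin d) | p.2 ∉ S} = 0 := by
      have he : {p : EuclideanSpace ℝ (Fin d) × EuclideanSpace ℝ (Fin d) | p.2 ∉ S} =
          Prod.snd ⁻¹' Sᶜ := rfl
      have hWS : W Sᶜ = ∅ := by
        ext n
        simp only [hW, Set.mem_setOf_eq, Set.mem_empty_iff_false, iff_false, not_exists]
        rintro x ⟨hx, h1', -⟩
        exact hx (mem_sphere_zero_iff_norm.mpr h1')
      rw [he, ← Measure.snd_apply hSmeas.compl, hsnd, hνW _ hSmeas.compl, hWS, measure_empty]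
    rw [MeasureTheory.ae_iff]
    refine measure_mono_null ?_ (measure_union_null h1 h2)
    intro p hp
    by_cases hp1 : p.1 ∈ S
    · right
      intro hp2
      exact hp ⟨hp1, hp2⟩
    · left
      exact hp1
  -- lower bound : the cost dominates the sum of potentials γ-a.e.
  have hlow : ∀ᵐ p ∂γ, ENNReal.ofReal (α p.1) + ENNReal.ofReal (β p.2) ≤
      gaussCost p.1 p.2 + ENNReal.ofReal M := by
    filter_upwards [haeγ] with p hp
    obtain ⟨hp1, hp2⟩ := hp
    have h1n : ‖p.1‖ = 1 := mem_sphere_zero_iff_norm.mp hp1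
    have h2n : ‖p.2‖ = 1 := mem_sphere_zero_iff_norm.mp hp2
    obtain ⟨hρr, hρR, hρK, -⟩ := radial_facts hKcpt.isClosed hr hKr hKR h2n
    have hρpos : 0 < radialFn K p.2 := lt_of_lt_of_le hr hρr
    have hhr' : r ≤ ⟪p.1, m p.1⟫ := hhr p.1 h1n
    have hh0 : 0 < ⟪p.1, m p.1⟫ := lt_of_lt_of_le hr hhr'
    have hhR' : ⟪p.1, m p.1⟫ ≤ R := (hhnorm p.1 h1n).trans (hmR p.1)
    have hkey : radialFn K p.2 * ⟪p.1, p.2⟫ ≤ ⟪p.1, m p.1⟫ := by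
      have := hmmax p.1 _ hρK
      rwa [real_inner_smul_right] at this
    have hα_eq : α p.1 = Real.log R - Real.log ⟪p.1, m p.1⟫ := by
      simp only [hα]
      have h1 : (0 : ℝ) ≤ Real.log R - Real.log ⟪p.1, m p.1⟫ := by
        rw [sub_nonneg]; exact (Real.log_le_log_iff hh0 hR0).mpr hhR'
      have h2 : Real.log R - Real.log ⟪p.1, m p.1⟫ ≤ M := by
        rw [hM]
        have := (Real.log_le_log_iff hr hh0).mpr hhr'
        linarith
      rw [max_eq_right h1, min_eq_right h2]
    have hβ_eq : β p.2 = Real.log (radialFn K p.2) - Real.log r := by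
      simp only [hβ]
      have h1 : (0 : ℝ) ≤ Real.log (radialFn K p.2) - Real.log r := by
        rw [sub_nonneg]; exact (Real.log_le_log_iff hr hρpos).mpr hρr
      have h2 : Real.log (radialFn K p.2) - Real.log r ≤ M := by
        rw [hM]
        have := (Real.log_le_log_iff hρpos hR0).mpr hρR
        linarith
      rw [max_eq_right h1, min_eq_right h2]
    rw [hα_eq, hβ_eq]
    by_cases hip : ⟪p.1, p.2⟫ ≤ 0
    · rw [gaussCost, if_pos hip, top_add]
      exact le_top
    · push_neg at hip
      rw [gaussCost, if_neg (not_le.mpr hip)]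
      have hreal : (Real.log R - Real.log ⟪p.1, m p.1⟫) +
          (Real.log (radialFn K p.2) - Real.log r) ≤ (-Real.log ⟪p.1, p.2⟫) + M := by
        have hlog : Real.log ⟪p.1, p.2⟫ ≤
            Real.log ⟪p.1, m p.1⟫ - Real.log (radialFn K p.2) := by
          have hle : ⟪p.1, p.2⟫ ≤ ⟪p.1, m p.1⟫ / radialFn K p.2 := by
            rw [le_div_iff₀ hρpos]
            linarith [hkey]
          have := (Real.log_le_log_iff hip (by positivity)).mpr hle
          rwa [Real.log_div hh0.ne' hρpos.ne'] at this
        rw [hM]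
        linarith
      calc ENNReal.ofReal (Real.log R - Real.log ⟪p.1, m p.1⟫) +
            ENNReal.ofReal (Real.log (radialFn K p.2) - Real.log r)
          = ENNReal.ofReal ((Real.log R - Real.log ⟪p.1, m p.1⟫) +
              (Real.log (radialFn K p.2) - Real.log r)) := by
            rw [ENNReal.ofReal_add]
            · rw [sub_nonneg]; exact (Real.log_le_log_iff hh0 hR0).mpr hhR'
            · rw [sub_nonneg]; exact (Real.log_le_log_iff hr hρpos).mpr hρr
        _ ≤ ENNReal.ofReal ((-Real.log ⟪p.1, p.2⟫) + M) := ENNReal.ofReal_le_ofReal hreal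
        _ ≤ ENNReal.ofReal (-Real.log ⟪p.1, p.2⟫) + ENNReal.ofReal M :=
            ENNReal.ofReal_add_le
  -- equality of integrals forces a.e. equality
  have hGmeas : Measurable (fun p : EuclideanSpace ℝ (Fin d) × EuclideanSpace ℝ (Fin d) =>
      ENNReal.ofReal (α p.1) + ENNReal.ofReal (β p.2)) :=
    (hαm'.comp measurable_fst).add (hβm'.comp measurable_snd)
  have hIG : ∫⁻ p, (ENNReal.ofReal (α p.1) + ENNReal.ofReal (β p.2)) ∂γ = IA + IB :=
    hsum γ hfst hsnd
  have hIGfin : ∫⁻ p, (ENNReal.ofReal (α p.1) + ENNReal.ofReal (β p.2)) ∂γ ≠ ⊤ := by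
    rw [hIG]; exact hABne
  have hIF : ∫⁻ p, (gaussCost p.1 p.2 + ENNReal.ofReal M) ∂γ =
      (∫⁻ p, gaussCost p.1 p.2 ∂γ) + ENNReal.ofReal M := by
    rw [lintegral_add_right _ measurable_const, lintegral_const, hγuniv, mul_one]
  have hFG_le : ∫⁻ p, (gaussCost p.1 p.2 + ENNReal.ofReal M) ∂γ ≤
      ∫⁻ p, (ENNReal.ofReal (α p.1) + ENNReal.ofReal (β p.2)) ∂γ := by
    rw [hIF, hIG, ← hIγ']
    exact add_le_add hopt' le_rfl
  have hsub0 : ∫⁻ p, ((gaussCost p.1 p.2 + ENNReal.ofReal M) -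
      (ENNReal.ofReal (α p.1) + ENNReal.ofReal (β p.2))) ∂γ = 0 := by
    rw [lintegral_sub hGmeas hIGfin hlow]
    exact tsub_eq_zero_of_le hFG_le
  have haeFG : ∀ᵐ p ∂γ, gaussCost p.1 p.2 + ENNReal.ofReal M ≤
      ENNReal.ofReal (α p.1) + ENNReal.ofReal (β p.2) := by
    have := (lintegral_eq_zero_iff ((hcostm.add measurable_const).sub hGmeas)).mp hsub0
    filter_upwards [this] with p hp
    exact tsub_eq_zero_iff_le.mp hp
  -- conclusion a.e.
  have hfinal : ∀ᵐ p ∂γ, r / R ≤ ⟪p.1, p.2⟫ := by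
    filter_upwards [haeFG, haeγ] with p hle hp
    have hGle : ENNReal.ofReal (α p.1) + ENNReal.ofReal (β p.2) ≤
        ENNReal.ofReal M + ENNReal.ofReal M :=
      add_le_add (ENNReal.ofReal_le_ofReal (min_le_left _ _))
        (ENNReal.ofReal_le_ofReal (min_le_left _ _))
    have hcle : gaussCost p.1 p.2 + ENNReal.ofReal M ≤ ENNReal.ofReal M + ENNReal.ofReal M :=
      hle.trans hGle
    have hcle' : gaussCost p.1 p.2 ≤ ENNReal.ofReal M :=
      (ENNReal.add_le_add_iff_right hMne).mp hcle
    by_cases hip : ⟪p.1, p.2⟫ ≤ 0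
    · exfalso
      rw [gaussCost, if_pos hip] at hcle'
      exact hMne (top_le_iff.mp hcle')
    · push_neg at hip
      rw [gaussCost, if_neg (not_le.mpr hip)] at hcle'
      have h1 : -Real.log ⟪p.1, p.2⟫ ≤ M := (ENNReal.ofReal_le_ofReal_iff hM0).mp hcle'
      have key : Real.log (r / R) ≤ Real.log ⟪p.1, p.2⟫ := by
        rw [Real.log_div hr.ne' hR0.ne']
        rw [hM] at h1
        linarith
      exact (Real.log_le_log_iff (by positivity) hip).mp key
  -- from a.e. to the support
  intro p hp
  by_contra hcon
  push_neg at hcon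
  have hU : IsOpen {q : EuclideanSpace ℝ (Fin d) × EuclideanSpace ℝ (Fin d) |
      ⟪q.1, q.2⟫ < r / R} := isOpen_lt hipc continuous_const
  have hpos := hp _ hU hcon
  have hzero : γ {q : EuclideanSpace ℝ (Fin d) × EuclideanSpace ℝ (Fin d) |
      ⟪q.1, q.2⟫ < r / R} = 0 := by
    have he : {q : EuclideanSpace ℝ (Fin d) × EuclideanSpace ℝ (Fin d) | ⟪q.1, q.2⟫ < r / R} =
        {q : EuclideanSpace ℝ (Fin d) × EuclideanSpace ℝ (Fin d) | ¬ r / R ≤ ⟪q.1, q.2⟫} := by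
      ext q; simp [not_le]
    rw [he]
    exact MeasureTheory.ae_iff.mp hfinal
  rw [hzero] at hpos
  exact lt_irrefl 0 hpos
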